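/- Let A be a finite type, β > 0 a real, and let ν, π_ref : A → ℝ be probability mass functions with ν(a) > 0 and π_ref(a) > 0 for all a. Let Adv : A → ℝ satisfy ∑_a π_ref(a)·Adv(a) = 0. Suppose π⁺ : A → ℝ minimizes L(π) = (1/2)·∑_a ν(a)·(Adv(a)/β − log(π(a)/π_ref(a)))² over all probability mass functions π with π(a) > 0 for all a. Then the one-step improvement I(π⁺) = ∑_a π⁺(a)·(Adv(a) − β·log(π⁺(a)/π_ref(a))) satisfies I(π⁺) ≥ 0, and I(π⁺) = 0 if and only if Adv(a) = 0 for all a. -/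

import Mathlib

/-- Single-state core of Theorem 1 (monotonic improvement): the minimizer of the exact
DAPO squared-error objective under an exploratory sampling distribution `ν` has
nonnegative KL-regularized one-step improvement over `πref`, and the improvement is
zero iff the advantage vanishes identically. -/
theorem dapo_single_state_improvement {A : Type*} [Fintype A] (β : ℝ) (hβ : 0 < β)
    (ν πref : A → ℝ)
    (hνpos : ∀ a, 0 < ν a) (hνsum : ∑ a, ν a = 1)
    (hrefpos : ∀ a, 0 < πref a) (hrefsum : ∑ a, πref a = 1)
    (Adv : A → ℝ) (hmean : ∑ a, πref a * Adv a = 0)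
    (πplus : A → ℝ) (hpluspos : ∀ a, 0 < πplus a) (hplussum : ∑ a, πplus a = 1)
    (hmin : ∀ π : A → ℝ, (∀ a, 0 < π a) → ∑ a, π a = 1 →
      (1 / 2) * ∑ a, ν a * (Adv a / β - Real.log (πplus a / πref a)) ^ 2 ≤
        (1 / 2) * ∑ a, ν a * (Adv a / β - Real.log (π a / πref a)) ^ 2) :
    0 ≤ ∑ a, πplus a * (Adv a - β * Real.log (πplus a / πref a)) ∧
      ((∑ a, πplus a * (Adv a - β * Real.log (πplus a / πref a))) = 0 ↔ ∀ a, Adv a = 0) := by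
  classical
  have hβne : β ≠ 0 := ne_of_gt hβ
  have hA : Nonempty A := by
    by_contra h
    rw [not_nonempty_iff] at h
    haveI := h
    rw [Finset.univ_eq_empty, Finset.sum_empty] at hνsum
    norm_num at hνsum
  set g : A → ℝ := fun a => Real.log (πplus a / πref a) with hgdef
  set f : A → ℝ := fun a => Adv a / β - g a with hfdef
  set S : ℝ := ∑ a, ν a * f a with hSdef
  -- First-order condition from minimality: ν a * f a = S * πplus a for all a.
  have hfoc : ∀ a₀ : A, ν a₀ * f a₀ = S * πplus a₀ := by
    intro a₀
    set ind : A → ℝ := fun a => if a = a₀ then (1:ℝ) else 0 with hinddef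
    set Z : ℝ → ℝ := fun t => ∑ b, πplus b * Real.exp (t * ind b) with hZdef
    have hZpos : ∀ t, 0 < Z t := fun t =>
      Finset.sum_pos (fun b _ => mul_pos (hpluspos b) (Real.exp_pos _)) Finset.univ_nonempty
    have hZ0 : Z 0 = 1 := by simp [hZdef, hplussum]
    have hZderiv : HasDerivAt Z (πplus a₀) 0 := by
      have h1 : HasDerivAt Z (∑ b, πplus b * (Real.exp ((0:ℝ) * ind b) * (1 * ind b))) 0 := by
        apply HasDerivAt.fun_sum
        intro b _
        exact (((hasDerivAt_id (0:ℝ)).mul_const (ind b)).exp).const_mul (πplus b)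
      convert h1 using 1
      simp [hinddef, Finset.sum_ite_eq', mul_comm]
    have hlogZ : HasDerivAt (fun t => Real.log (Z t)) (πplus a₀) 0 := by
      have := hZderiv.log (ne_of_gt (hZpos 0))
      simpa [hZ0] using this
    set φ : ℝ → ℝ := fun t => (1 / 2) * ∑ a, ν a * (f a - t * ind a + Real.log (Z t)) ^ 2
      with hφdef
    have hφderiv : HasDerivAt φ (S * πplus a₀ - ν a₀ * f a₀) 0 := by
      have h1 : HasDerivAt φ
          ((1/2) * ∑ a, ν a * (2 * (f a - 0 * ind a + Real.log (Z 0)) ^ 1 *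
            ((0 - 1 * ind a) + πplus a₀))) 0 := by
        apply HasDerivAt.const_mul
        apply HasDerivAt.fun_sum
        intro a _
        have hu : HasDerivAt (fun t => f a - t * ind a + Real.log (Z t))
            ((0 - 1 * ind a) + πplus a₀) 0 :=
          (((hasDerivAt_const (0:ℝ) (f a)).sub ((hasDerivAt_id (0:ℝ)).mul_const (ind a))).add
            hlogZ)
        exact (hu.pow 2).const_mul (ν a)
      convert h1 using 1
      have : ∀ a, ν a * (2 * (f a - 0 * ind a + Real.log (Z 0)) ^ 1 *
          ((0 - 1 * ind a) + πplus a₀)) = 2 * (ν a * f a * πplus a₀) - 2 * (ν a * f a * ind a) := by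
        intro a
        simp [hZ0]
        ring
      rw [Finset.sum_congr rfl (fun a _ => this a), Finset.sum_sub_distrib]
      rw [← Finset.mul_sum, ← Finset.mul_sum]
      have h2 : ∑ a, ν a * f a * ind a = ν a₀ * f a₀ := by
        simp [hinddef, mul_ite, Finset.sum_ite_eq']
      have h3 : ∑ a, ν a * f a * πplus a₀ = S * πplus a₀ := by
        rw [← Finset.sum_mul]
      rw [h2, h3]
      ring
    -- t = 0 is a global minimum of φ
    have hglob : ∀ t, φ 0 ≤ φ t := by
      intro t
      set π : A → ℝ := fun a => πplus a * Real.exp (t * ind a) / Z t with hπdef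
      have hπpos : ∀ a, 0 < π a :=
        fun a => div_pos (mul_pos (hpluspos a) (Real.exp_pos _)) (hZpos t)
      have hπsum : ∑ a, π a = 1 := by
        rw [hπdef, ← Finset.sum_div]
        exact div_self (ne_of_gt (hZpos t))
      have hkey := hmin π hπpos hπsum
      have hL : ∀ a, Adv a / β - Real.log (π a / πref a) = f a - t * ind a + Real.log (Z t) := by
        intro a
        have hlogπ : Real.log (π a / πref a)
            = g a + t * ind a - Real.log (Z t) := by
          rw [hπdef]
          have h1 : πplus a * Real.exp (t * ind a) / Z t / πref a
              = (πplus a / πref a) * Real.exp (t * ind a) / Z t := by ring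
          rw [h1, Real.log_div
              (ne_of_gt (mul_pos (div_pos (hpluspos a) (hrefpos a)) (Real.exp_pos _)))
              (ne_of_gt (hZpos t)),
            Real.log_mul (ne_of_gt (div_pos (hpluspos a) (hrefpos a)))
              (ne_of_gt (Real.exp_pos _)), Real.log_exp]
        rw [hlogπ, hfdef]
        ring
      have hφt : φ t = (1 / 2) * ∑ a, ν a * (Adv a / β - Real.log (π a / πref a)) ^ 2 := by
        simp only [hφdef]
        congr 1
        exact Finset.sum_congr rfl fun a _ => by rw [hL a]
      have hφ0 : φ 0 = (1 / 2) * ∑ a, ν a * (Adv a / β - Real.log (πplus a / πref a)) ^ 2 := by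
        simp only [hφdef, hZ0, Real.log_one]
        congr 1
        refine Finset.sum_congr rfl fun a _ => ?_
        rw [hfdef, hgdef]
        ring_nf
      rw [hφ0, hφt]
      exact hkey
    have hloc : IsLocalMin φ 0 := Filter.Eventually.of_forall hglob
    have := hloc.hasDerivAt_eq_zero hφderiv
    linarith
  -- The improvement I = β * S * T with T = ∑ πplus² / ν
  set T : ℝ := ∑ a, πplus a ^ 2 / ν a with hTdef
  have hTpos : 0 < T :=
    Finset.sum_pos (fun a _ => div_pos (pow_pos (hpluspos a) 2) (hνpos a)) Finset.univ_nonempty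
  have hI : ∑ a, πplus a * (Adv a - β * Real.log (πplus a / πref a)) = β * S * T := by
    have : ∀ a, πplus a * (Adv a - β * Real.log (πplus a / πref a))
        = β * (S * (πplus a ^ 2 / ν a)) := by
      intro a
      have h1 : πplus a * f a = S * (πplus a ^ 2 / ν a) := by
        have h2 := hfoc a
        have h3 : f a = S * πplus a / ν a := by
          rw [eq_div_iff (hνpos a).ne']
          linear_combination h2
        rw [h3]
        ring
      have h3 : Adv a - β * g a = β * f a := by
        rw [hfdef]; field_simp
      calc πplus a * (Adv a - β * Real.log (πplus a / πref a))
          = πplus a * (β * f a) := by rw [← h3]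
        _ = β * (πplus a * f a) := by ring
        _ = β * (S * (πplus a ^ 2 / ν a)) := by rw [h1]
    rw [Finset.sum_congr rfl fun a _ => this a, ← Finset.mul_sum, ← Finset.mul_sum, ← hTdef]
    ring
  -- S ≥ 0
  have hexp : ∀ a, πref a * (1 + Adv a / β) ≤ πref a * Real.exp (Adv a / β) := fun a =>
    mul_le_mul_of_nonneg_left (by linarith [Real.add_one_le_exp (Adv a / β)])
      (le_of_lt (hrefpos a))
  have hsum1 : ∑ a, πref a * (1 + Adv a / β) = 1 := by
    have : ∀ a, πref a * (1 + Adv a / β) = πref a + (πref a * Adv a) / β := by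
      intro a; field_simp
    rw [Finset.sum_congr rfl fun a _ => this a, Finset.sum_add_distrib, ← Finset.sum_div,
      hmean, hrefsum]
    simp
  have hSnonneg : 0 ≤ S := by
    by_contra hneg
    push_neg at hneg
    have hflt : ∀ a, f a < 0 := by
      intro a
      have := hfoc a
      nlinarith [hνpos a, hpluspos a]
    have hgt : ∀ a, πref a * Real.exp (Adv a / β) < πplus a := by
      intro a
      have h1 : Adv a / β < g a := by have := hflt a; rw [hfdef] at this; linarith
      have h2 : Real.exp (Adv a / β) < πplus a / πref a := by
        rw [← Real.exp_log (div_pos (hpluspos a) (hrefpos a))]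
        exact Real.exp_lt_exp.mpr h1
      calc πref a * Real.exp (Adv a / β) < πref a * (πplus a / πref a) :=
            mul_lt_mul_of_pos_left h2 (hrefpos a)
        _ = πplus a := by
            rw [mul_comm]
            exact div_mul_cancel₀ _ (ne_of_gt (hrefpos a))
    have h4 : ∑ a, πref a * Real.exp (Adv a / β) < 1 := by
      rw [← hplussum]
      exact Finset.sum_lt_sum_of_nonempty Finset.univ_nonempty fun a _ => hgt a
    have h5 : (1:ℝ) ≤ ∑ a, πref a * Real.exp (Adv a / β) := by
      rw [← hsum1]
      exact Finset.sum_le_sum fun a _ => hexp a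
    linarith
  constructor
  · rw [hI]; positivity
  constructor
  · -- I = 0 → Adv ≡ 0
    intro h0
    rw [hI] at h0
    have hS0 : S = 0 := by
      rcases mul_eq_zero.mp h0 with h | h
      · rcases mul_eq_zero.mp h with h' | h'
        · exact absurd h' hβne
        · exact h'
      · exact absurd h (ne_of_gt hTpos)
    have hf0 : ∀ a, f a = 0 := by
      intro a
      have := hfoc a
      rw [hS0] at this
      simp at this
      rcases this with h | h
      · exact absurd h (hνpos a).ne'
      · exact h
    have hπeq : ∀ a, πplus a = πref a * Real.exp (Adv a / β) := by
      intro a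
      have h1 : g a = Adv a / β := by have := hf0 a; rw [hfdef] at this; linarith
      have h2 : πplus a / πref a = Real.exp (Adv a / β) := by
        rw [← h1, hgdef, Real.exp_log (div_pos (hpluspos a) (hrefpos a))]
      rw [div_eq_iff (ne_of_gt (hrefpos a))] at h2
      linarith [h2]
    have hsumeq : ∑ a, πref a * Real.exp (Adv a / β) = ∑ a, πref a * (1 + Adv a / β) := by
      rw [hsum1, ← hplussum]
      exact (Finset.sum_congr rfl fun a _ => (hπeq a).symm)
    -- termwise equality
    have heach : ∀ a, πref a * Real.exp (Adv a / β) = πref a * (1 + Adv a / β) := by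
      intro a
      by_contra hne
      have hlt : πref a * (1 + Adv a / β) < πref a * Real.exp (Adv a / β) :=
        lt_of_le_of_ne (hexp a) (Ne.symm hne)
      have : ∑ b, πref b * (1 + Adv b / β) < ∑ b, πref b * Real.exp (Adv b / β) :=
        Finset.sum_lt_sum (fun b _ => hexp b) ⟨a, Finset.mem_univ a, hlt⟩
      linarith [hsumeq]
    intro a
    have h1 : Real.exp (Adv a / β) = 1 + Adv a / β :=
      mul_left_cancel₀ (ne_of_gt (hrefpos a)) (heach a)
    by_contra hAne
    have hxne : Adv a / β ≠ 0 := div_ne_zero hAne hβne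
    have := Real.add_one_lt_exp hxne
    rw [h1] at this
    linarith
  · -- Adv ≡ 0 → I = 0
    intro hAdv
    rw [hI]
    have hkey := hmin πref hrefpos hrefsum
    have hrhs : (1 / 2) * ∑ a, ν a * (Adv a / β - Real.log (πref a / πref a)) ^ 2 = 0 := by
      have hz : ∀ a, ν a * (Adv a / β - Real.log (πref a / πref a)) ^ 2 = 0 := by
        intro a
        rw [div_self (ne_of_gt (hrefpos a)), Real.log_one, hAdv a]
        simp
      rw [Finset.sum_congr rfl fun a _ => hz a]
      simp
    rw [hrhs] at hkey
    have hterm : ∀ a ∈ Finset.univ, (0:ℝ) ≤ ν a * (Adv a / β - Real.log (πplus a / πref a)) ^ 2 :=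
      fun a _ => mul_nonneg (le_of_lt (hνpos a)) (sq_nonneg _)
    have hsum0 : ∑ a, ν a * (Adv a / β - Real.log (πplus a / πref a)) ^ 2 = 0 := by
      have := Finset.sum_nonneg hterm
      linarith
    have hf0 : ∀ a, f a = 0 := by
      intro a
      have := (Finset.sum_eq_zero_iff_of_nonneg hterm).mp hsum0 a (Finset.mem_univ a)
      rcases mul_eq_zero.mp this with h | h
      · exact absurd h (hνpos a).ne'
      · simp only [hfdef, hgdef]
        exact pow_eq_zero_iff (by norm_num) |>.mp h
    have : S = 0 := by
      rw [hSdef, Finset.sum_congr rfl fun a _ => by rw [hf0 a, mul_zero]]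
      simp
    rw [this]
    ring
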